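/- Let z ∈ (0, 1) and take the five-point scheme with the fourth-order Strang parameters σ = z(1 − z²)/6 and τ = −z²(1 − z²)/24. Let Φ : ℤ → ℝ be square-summable over j ≤ 0 and satisfy the type-2 second-order extrapolation conditions (ΔΦ)₀ = 0 and (Δ²Φ)₀ = 0 (these determine the ghost values Φ₁ and Φ₂). Define Ψ_j := (A(z)Φ)_j for j ≤ 0. Then ∑_{j ≤ −1} Ψ_j² + (1/2)·Ψ₀² ≤ ∑_{j ≤ −1} Φ_j² + (1/2)·Φ₀²; that is, the fourth-order Strang scheme with this boundary closure is semi-bounded for the weighted norm with weight 1/2 at j = 0. -/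

import Mathlib

set_option maxHeartbeats 3200000


/-- Backward difference `(DΦ)_j = Φ_j - Φ_{j-1}`. -/
noncomputable def Dd (Φ : ℤ → ℝ) (j : ℤ) : ℝ := Φ j - Φ (j - 1)

/-- Centered difference `(D₀Φ)_j = (Φ_{j+1} - Φ_{j-1})/2`. -/
noncomputable def D0 (Φ : ℤ → ℝ) (j : ℤ) : ℝ := (Φ (j + 1) - Φ (j - 1)) / 2

/-- Discrete Laplacian `(ΔΦ)_j = Φ_{j-1} - 2Φ_j + Φ_{j+1}`. -/
noncomputable def Lap (Φ : ℤ → ℝ) (j : ℤ) : ℝ := Φ (j - 1) - 2 * Φ j + Φ (j + 1)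

/-- `(DΔΦ)_j = (ΔΦ)_j - (ΔΦ)_{j-1}`. -/
noncomputable def DLap (Φ : ℤ → ℝ) (j : ℤ) : ℝ := Lap Φ j - Lap Φ (j - 1)

/-- `(D₀ΔΦ)_j = (-Φ_{j-2} + 2Φ_{j-1} - 2Φ_{j+1} + Φ_{j+2})/2`. -/
noncomputable def D0Lap (Φ : ℤ → ℝ) (j : ℤ) : ℝ :=
  (-Φ (j - 2) + 2 * Φ (j - 1) - 2 * Φ (j + 1) + Φ (j + 2)) / 2

/-- `(Δ²Φ)_j = Φ_{j-2} - 4Φ_{j-1} + 6Φ_j - 4Φ_{j+1} + Φ_{j+2}`. -/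
noncomputable def Lap2 (Φ : ℤ → ℝ) (j : ℤ) : ℝ :=
  Φ (j - 2) - 4 * Φ (j - 1) + 6 * Φ j - 4 * Φ (j + 1) + Φ (j + 2)

/-- The five point scheme `A(z)Φ = Φ - z D₀Φ + (z²/2) ΔΦ + σ D₀ΔΦ + τ Δ²Φ`. -/
noncomputable def A5 (z σ τ : ℝ) (Φ : ℤ → ℝ) (j : ℤ) : ℝ :=
  Φ j - z * D0 Φ j + z ^ 2 / 2 * Lap Φ j + σ * D0Lap Φ j + τ * Lap2 Φ j

/-- Telescoping flux for the energy identity of the fourth-order Strang scheme. -/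
noncomputable def Bflux (z : ℝ) (Φ : ℤ → ℝ) (j : ℤ) : ℝ :=
    ((-5/72)*z^2 + (-1/144)*z^3 + (7/72)*z^4 + (1/72)*z^5 + (-1/36)*z^6 + (-1/144)*z^7) * Φ (j - 1) * Φ (j - 1)
  + ((1/2)*z^2 + (1/6)*z^3 + (-5/8)*z^4 + (-5/24)*z^5 + (1/8)*z^6 + (1/24)*z^7) * Φ (j - 1) * Φ j
  + ((1/6)*z + (-1/3)*z^2 + (-3/8)*z^3 + (5/12)*z^4 + (1/4)*z^5 + (-1/12)*z^6 + (-1/24)*z^7) * Φ (j - 1) * Φ (j + 1)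
  + ((1/18)*z^2 + (1/18)*z^3 + (-5/72)*z^4 + (-5/72)*z^5 + (1/72)*z^6 + (1/72)*z^7) * Φ (j - 1) * Φ (j + 2)
  + ((-9/8)*z^2 + (-43/48)*z^3 + (3/4)*z^4 + (11/24)*z^5 + (-1/8)*z^6 + (-1/16)*z^7) * Φ j * Φ j
  + ((-4/3)*z + (1/2)*z^2 + (13/6)*z^3 + (-5/8)*z^4 + (-23/24)*z^5 + (1/8)*z^6 + (1/8)*z^7) * Φ j * Φ (j + 1)
  + ((1/6)*z + (-3/8)*z^3 + (1/4)*z^5 + (-1/24)*z^7) * Φ j * Φ (j + 2)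
  + ((5/8)*z^2 + (-43/48)*z^3 + (-1/8)*z^4 + (11/24)*z^5 + (-1/16)*z^7) * Φ (j + 1) * Φ (j + 1)
  + ((-1/6)*z^2 + (1/6)*z^3 + (5/24)*z^4 + (-5/24)*z^5 + (-1/24)*z^6 + (1/24)*z^7) * Φ (j + 1) * Φ (j + 2)
  + ((1/72)*z^2 + (-1/144)*z^3 + (-1/36)*z^4 + (1/72)*z^5 + (1/72)*z^6 + (-1/144)*z^7) * Φ (j + 2) * Φ (j + 2)

/-- The flux as a polynomial of four neighbouring values. -/
noncomputable def QB (z x0 x1 x2 x3 : ℝ) : ℝ :=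
    ((-5/72)*z^2 + (-1/144)*z^3 + (7/72)*z^4 + (1/72)*z^5 + (-1/36)*z^6 + (-1/144)*z^7) * x0 * x0
  + ((1/2)*z^2 + (1/6)*z^3 + (-5/8)*z^4 + (-5/24)*z^5 + (1/8)*z^6 + (1/24)*z^7) * x0 * x1
  + ((1/6)*z + (-1/3)*z^2 + (-3/8)*z^3 + (5/12)*z^4 + (1/4)*z^5 + (-1/12)*z^6 + (-1/24)*z^7) * x0 * x2
  + ((1/18)*z^2 + (1/18)*z^3 + (-5/72)*z^4 + (-5/72)*z^5 + (1/72)*z^6 + (1/72)*z^7) * x0 * x3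
  + ((-9/8)*z^2 + (-43/48)*z^3 + (3/4)*z^4 + (11/24)*z^5 + (-1/8)*z^6 + (-1/16)*z^7) * x1 * x1
  + ((-4/3)*z + (1/2)*z^2 + (13/6)*z^3 + (-5/8)*z^4 + (-23/24)*z^5 + (1/8)*z^6 + (1/8)*z^7) * x1 * x2
  + ((1/6)*z + (-3/8)*z^3 + (1/4)*z^5 + (-1/24)*z^7) * x1 * x3
  + ((5/8)*z^2 + (-43/48)*z^3 + (-1/8)*z^4 + (11/24)*z^5 + (-1/16)*z^7) * x2 * x2
  + ((-1/6)*z^2 + (1/6)*z^3 + (5/24)*z^4 + (-5/24)*z^5 + (-1/24)*z^6 + (1/24)*z^7) * x2 * x3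
  + ((1/72)*z^2 + (-1/144)*z^3 + (-1/36)*z^4 + (1/72)*z^5 + (1/72)*z^6 + (-1/144)*z^7) * x3 * x3

lemma Bflux_eq_QB (z : ℝ) (Φ : ℤ → ℝ) (n : ℕ) :
    Bflux z Φ (-1 - (n:ℤ))
      = QB z (Φ (-2 - (n:ℤ))) (Φ (-1 - (n:ℤ))) (Φ (0 - (n:ℤ))) (Φ (1 - (n:ℤ))) := by
  have a1 : (-1 - (n:ℤ)) - 1 = -2 - (n:ℤ) := by ring
  have a2 : (-1 - (n:ℤ)) + 1 = 0 - (n:ℤ) := by ring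
  have a3 : (-1 - (n:ℤ)) + 2 = 1 - (n:ℤ) := by ring
  simp only [Bflux, QB, a1, a2, a3]

lemma QB_cont (z : ℝ) :
    Continuous fun p : ℝ × ℝ × ℝ × ℝ => QB z p.1 p.2.1 p.2.2.1 p.2.2.2 := by
  unfold QB; fun_prop

lemma QB_zero (z : ℝ) : QB z 0 0 0 0 = 0 := by simp [QB]

/-- Per-point energy identity for the fourth-order Strang scheme. -/
lemma A5_step (z : ℝ) (Φ : ℤ → ℝ) (j : ℤ) :
    (A5 z (z * (1 - z ^ 2) / 6) (-(z ^ 2 * (1 - z ^ 2)) / 24) Φ j) ^ 2 - (Φ j) ^ 2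
      = Bflux z Φ j - Bflux z Φ (j - 1)
        - (z ^ 2 * (1 - z ^ 2) * (4 - z ^ 2) / 72 * (DLap Φ j) ^ 2
           + z ^ 2 * (1 - z ^ 2) ^ 2 * (4 - z ^ 2) / 576 * (Lap2 Φ j) ^ 2) := by
  have h1 : j - 1 - 1 = j - 2 := by ring
  have h2 : j - 1 + 1 = j := by ring
  have h3 : j - 1 + 2 = j + 1 := by ring
  simp only [A5, D0, Lap, D0Lap, Lap2, DLap, Bflux, h1, h2, h3]
  ring

/-- Negativity certificate for the boundary quadratic form. -/
lemma bdry_quad (z a b c : ℝ) (hz1 : 0 < z) (hz2 : z < 1) :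
    ((-1/18)*z^2 + (-1/144)*z^3 + (5/72)*z^4 + (1/72)*z^5 + (-1/72)*z^6 + (-1/144)*z^7)*a^2 + ((-1/6)*z + (-2/9)*z^2 + (-19/36)*z^3 + (5/18)*z^4 + (2/9)*z^5 + (-1/18)*z^6 + (-1/36)*z^7)*b^2 + ((-7/6)*z + (37/36)*z^2 + (-61/144)*z^3 + (-1/72)*z^4 + (7/72)*z^5 + (-1/72)*z^6 + (-1/144)*z^7)*c^2 + 2*((1/9)*z^2 + (1/18)*z^3 + (-5/36)*z^4 + (-5/72)*z^5 + (1/36)*z^6 + (1/72)*z^7)*a*b + 2*((-1/72)*z^2 + (-7/144)*z^3 + (1/36)*z^4 + (1/18)*z^5 + (-1/72)*z^6 + (-1/144)*z^7)*a*c + 2*((1/6)*z + (-17/36)*z^2 + (17/36)*z^3 + (-1/18)*z^4 + (-11/72)*z^5 + (1/36)*z^6 + (1/72)*z^7)*b*c ≤ 0 := by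
  have hzz : z^2 < 1 := by nlinarith
  have hz3 : z^3 < 1 := by nlinarith
  have hz4 : z^4 < 1 := by nlinarith
  have hz5 : z^5 < 1 := by nlinarith
  have hp1 : 0 < (z^2*(1-z^2)*(8 + z - 2*z^2 - z^3)/144) := by
    apply div_pos (mul_pos (mul_pos (by positivity) (by nlinarith)) (by nlinarith)) (by norm_num)
  have hp2 : 0 < (z^3*(1-z^2)*(16 + 2*z + 28*z^2 - z^3 - 8*z^4 - z^5)/1728) := by
    apply div_pos (mul_pos (mul_pos (by positivity) (by nlinarith)) (by nlinarith)) (by norm_num)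
  have hp3 : 0 < (z^4*(1-z^2)*(32 + 3*z + 8*z^2 - 3*z^3 - 4*z^4)/3456) := by
    apply div_pos (mul_pos (mul_pos (by positivity) (by nlinarith)) (by nlinarith)) (by norm_num)
  have key : (((-1/18)*z^2 + (-1/144)*z^3 + (5/72)*z^4 + (1/72)*z^5 + (-1/72)*z^6 + (-1/144)*z^7)*a^2 + ((-1/6)*z + (-2/9)*z^2 + (-19/36)*z^3 + (5/18)*z^4 + (2/9)*z^5 + (-1/18)*z^6 + (-1/36)*z^7)*b^2 + ((-7/6)*z + (37/36)*z^2 + (-61/144)*z^3 + (-1/72)*z^4 + (7/72)*z^5 + (-1/72)*z^6 + (-1/144)*z^7)*c^2 + 2*((1/9)*z^2 + (1/18)*z^3 + (-5/36)*z^4 + (-5/72)*z^5 + (1/36)*z^6 + (1/72)*z^7)*a*b + 2*((-1/72)*z^2 + (-7/144)*z^3 + (1/36)*z^4 + (1/18)*z^5 + (-1/72)*z^6 + (-1/144)*z^7)*a*c + 2*((1/6)*z + (-17/36)*z^2 + (17/36)*z^3 + (-1/18)*z^4 + (-11/72)*z^5 + (1/36)*z^6 + (1/72)*z^7)*b*c)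 * ((z^2*(1-z^2)*(8 + z - 2*z^2 - z^3)/144) * (z^3*(1-z^2)*(16 + 2*z + 28*z^2 - z^3 - 8*z^4 - z^5)/1728))
      = -((z^3*(1-z^2)*(16 + 2*z + 28*z^2 - z^3 - 8*z^4 - z^5)/1728) * (((-1/18)*z^2 + (-1/144)*z^3 + (5/72)*z^4 + (1/72)*z^5 + (-1/72)*z^6 + (-1/144)*z^7)*a + ((1/9)*z^2 + (1/18)*z^3 + (-5/36)*z^4 + (-5/72)*z^5 + (1/36)*z^6 + (1/72)*z^7)*b + ((-1/72)*z^2 + (-7/144)*z^3 + (1/36)*z^4 + (1/18)*z^5 + (-1/72)*z^6 + (-1/144)*z^7)*c)^2 + (((1/108)*z^3 + (1/864)*z^4 + (1/144)*z^5 + (-1/576)*z^6 + (-1/48)*z^7 + (1/216)*z^9 + (1/1728)*z^10)*b + ((-1/108)*z^3 + (23/864)*z^4 + (-1/192)*z^5 + (-19/576)*z^6 + (5/288)*z^7 + (1/144)*z^8 + (-5/1728)*z^9 + (-1/1728)*z^10)*c)^2 + ((z^2*(1-z^2)*(8 + z - 2*z^2 - z^3)/144) * (z^4*(1-z^2)*(32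 + 3*z + 8*z^2 - 3*z^3 - 4*z^4)/3456)) * c^2) := by
    ring
  by_contra hcon
  push_neg at hcon
  have hpos : 0 < (((-1/18)*z^2 + (-1/144)*z^3 + (5/72)*z^4 + (1/72)*z^5 + (-1/72)*z^6 + (-1/144)*z^7)*a^2 + ((-1/6)*z + (-2/9)*z^2 + (-19/36)*z^3 + (5/18)*z^4 + (2/9)*z^5 + (-1/18)*z^6 + (-1/36)*z^7)*b^2 + ((-7/6)*z + (37/36)*z^2 + (-61/144)*z^3 + (-1/72)*z^4 + (7/72)*z^5 + (-1/72)*z^6 + (-1/144)*z^7)*c^2 + 2*((1/9)*z^2 + (1/18)*z^3 + (-5/36)*z^4 + (-5/72)*z^5 + (1/36)*z^6 + (1/72)*z^7)*a*b + 2*((-1/72)*z^2 + (-7/144)*z^3 + (1/36)*z^4 + (1/18)*z^5 + (-1/72)*z^6 + (-1/144)*z^7)*a*c + 2*((1/6)*z + (-17/36)*z^2 + (17/36)*z^3 + (-1/18)*z^4 + (-11/72)*z^5 + (1/36)*z^6 + (1/72)*z^7)*b*c) * ((z^2*(1-z^2)*(8 + z - 2*z^2 - z^3)/144) * (z^3*(1-z^2)*(16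 + 2*z + 28*z^2 - z^3 - 8*z^4 - z^5)/1728)) := mul_pos hcon (mul_pos hp1 hp2)
  rw [key] at hpos
  have hnn : 0 ≤ (z^3*(1-z^2)*(16 + 2*z + 28*z^2 - z^3 - 8*z^4 - z^5)/1728) * (((-1/18)*z^2 + (-1/144)*z^3 + (5/72)*z^4 + (1/72)*z^5 + (-1/72)*z^6 + (-1/144)*z^7)*a + ((1/9)*z^2 + (1/18)*z^3 + (-5/36)*z^4 + (-5/72)*z^5 + (1/36)*z^6 + (1/72)*z^7)*b + ((-1/72)*z^2 + (-7/144)*z^3 + (1/36)*z^4 + (1/18)*z^5 + (-1/72)*z^6 + (-1/144)*z^7)*c)^2 + (((1/108)*z^3 + (1/864)*z^4 + (1/144)*z^5 + (-1/576)*z^6 + (-1/48)*z^7 + (1/216)*z^9 + (1/1728)*z^10)*b + ((-1/108)*z^3 + (23/864)*z^4 + (-1/192)*z^5 + (-19/576)*z^6 + (5/288)*z^7 + (1/144)*z^8 + (-5/1728)*z^9 + (-1/1728)*z^10)*c)^2 + ((z^2*(1-z^2)*(8 + z - 2*z^2 - z^3)/144) * (z^4*(1-z^2)*(32 + 3*z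 + 8*z^2 - 3*z^3 - 4*z^4)/3456)) * c^2 :=
    add_nonneg (add_nonneg (mul_nonneg hp2.le (sq_nonneg _)) (sq_nonneg _))
      (mul_nonneg (mul_nonneg hp1.le hp3.le) (sq_nonneg _))
  linarith

/-- Boundary inequality under the type-2 extrapolation ghost values. -/
lemma A5_boundary (z : ℝ) (hz1 : 0 < z) (hz2 : z < 1) (Φ : ℤ → ℝ)
    (hg1 : Φ 1 = 2 * Φ 0 - Φ (-1)) (hg2 : Φ 2 = 2 * Φ 0 - Φ (-2)) :
    1 / 2 * (A5 z (z * (1 - z ^ 2) / 6) (-(z ^ 2 * (1 - z ^ 2)) / 24) Φ 0) ^ 2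
      - 1 / 2 * (Φ 0) ^ 2 + Bflux z Φ (-1) ≤ 0 := by
  have e01 : (0:ℤ) - 1 = -1 := by norm_num
  have e02 : (0:ℤ) + 1 = 1 := by norm_num
  have e03 : (0:ℤ) - 2 = -2 := by norm_num
  have e04 : (0:ℤ) + 2 = 2 := by norm_num
  have e05 : (-1:ℤ) - 1 = -2 := by norm_num
  have e06 : (-1:ℤ) + 1 = 0 := by norm_num
  have e07 : (-1:ℤ) + 2 = 1 := by norm_num
  have expand : 1 / 2 * (A5 z (z * (1 - z ^ 2) / 6) (-(z ^ 2 * (1 - z ^ 2)) / 24) Φ 0) ^ 2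
      - 1 / 2 * (Φ 0) ^ 2 + Bflux z Φ (-1)
      = ((-1/18)*z^2 + (-1/144)*z^3 + (5/72)*z^4 + (1/72)*z^5 + (-1/72)*z^6 + (-1/144)*z^7)*(Φ (-2))^2 + ((-1/6)*z + (-2/9)*z^2 + (-19/36)*z^3 + (5/18)*z^4 + (2/9)*z^5 + (-1/18)*z^6 + (-1/36)*z^7)*(Φ (-1))^2 + ((-7/6)*z + (37/36)*z^2 + (-61/144)*z^3 + (-1/72)*z^4 + (7/72)*z^5 + (-1/72)*z^6 + (-1/144)*z^7)*(Φ 0)^2 + 2*((1/9)*z^2 + (1/18)*z^3 + (-5/36)*z^4 + (-5/72)*z^5 + (1/36)*z^6 + (1/72)*z^7)*(Φ (-2))*(Φ (-1)) + 2*((-1/72)*z^2 + (-7/144)*z^3 + (1/36)*z^4 + (1/18)*z^5 + (-1/72)*z^6 + (-1/144)*z^7)*(Φ (-2))*(Φ 0) + 2*((1/6)*z + (-17/36)*z^2 + (17/36)*z^3 + (-1/18)*z^4 + (-11/72)*z^5 + (1/36)*z^6 + (1/72)*z^7)*(Φ (-1))*(Φ 0) := by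
    simp only [A5, D0, Lap, D0Lap, Lap2, Bflux, e01, e02, e03, e04, e05, e06, e07, hg1, hg2]
    ring
  rw [expand]
  exact bdry_quad z (Φ (-2)) (Φ (-1)) (Φ 0) hz1 hz2

/-- Semi-boundedness of the fourth order Strang scheme under the type-2 second
order extrapolation conditions `(ΔΦ)₀ = (Δ²Φ)₀ = 0`. -/
theorem strang_scheme_type2_extrapolation (z : ℝ) (hz : z ∈ Set.Ioo (0 : ℝ) 1)
    (Φ : ℤ → ℝ) (hΦ : Summable (fun j : {j : ℤ // j ≤ 0} => (Φ j.1) ^ 2))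
    (hext1 : Lap Φ 0 = 0) (hext2 : Lap2 Φ 0 = 0) :
    (∑' j : {j : ℤ // j ≤ -1},
        (A5 z (z * (1 - z ^ 2) / 6) (-(z ^ 2 * (1 - z ^ 2)) / 24) Φ j.1) ^ 2)
        + 1 / 2 * (A5 z (z * (1 - z ^ 2) / 6) (-(z ^ 2 * (1 - z ^ 2)) / 24) Φ 0) ^ 2
      ≤ (∑' j : {j : ℤ // j ≤ -1}, (Φ j.1) ^ 2) + 1 / 2 * (Φ 0) ^ 2 := by
  obtain ⟨hz1, hz2⟩ := hz
  have e01 : (0:ℤ) - 1 = -1 := by norm_num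
  have e02 : (0:ℤ) + 1 = 1 := by norm_num
  have e03 : (0:ℤ) - 2 = -2 := by norm_num
  have e04 : (0:ℤ) + 2 = 2 := by norm_num
  have hg1 : Φ 1 = 2 * Φ 0 - Φ (-1) := by
    have h := hext1
    simp only [Lap, e01, e02] at h
    linarith
  have hg2 : Φ 2 = 2 * Φ 0 - Φ (-2) := by
    have h := hext2
    simp only [Lap2, e01, e02, e03, e04] at h
    rw [hg1] at h
    linarith
  -- summability of shifted squares
  have hsum : ∀ c : ℤ, c ≤ 0 → Summable (fun n : ℕ => (Φ (c - (n:ℤ))) ^ 2) := by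
    intro c hc
    have hinj : Function.Injective
        (fun n : ℕ => (⟨c - (n:ℤ), by omega⟩ : {j : ℤ // j ≤ 0})) := by
      intro m n hmn
      simp only [Subtype.mk.injEq] at hmn
      omega
    have h0 := hΦ.comp_injective hinj
    exact h0
  -- decay of shifted values
  have htend : ∀ c : ℤ, c ≤ 0 →
      Filter.Tendsto (fun n : ℕ => Φ (c - (n:ℤ))) Filter.atTop (nhds 0) := by
    intro c hc
    have h1 := (hsum c hc).tendsto_atTop_zero
    have h2 : Filter.Tendsto (fun n : ℕ => |Φ (c - (n:ℤ))|) Filter.atTop (nhds 0) := by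
      have h3 := h1.sqrt
      simpa [Real.sqrt_sq_eq_abs] using h3
    exact squeeze_zero_norm (fun n => (Real.norm_eq_abs _).le) h2
  have t2 := htend (-2) (by norm_num)
  have t1 := htend (-1) (by norm_num)
  have t0 := htend 0 le_rfl
  have tp1 : Filter.Tendsto (fun n : ℕ => Φ (1 - (n:ℤ))) Filter.atTop (nhds 0) := by
    rw [← Filter.tendsto_add_atTop_iff_nat 1]
    refine t0.congr fun n => ?_
    congr 1
    push_cast
    ring
  -- the flux tends to zero
  have hB : Filter.Tendsto (fun n : ℕ => Bflux z Φ (-1 - (n:ℤ))) Filter.atTop (nhds 0) := by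
    have hq : Filter.Tendsto
        (fun n : ℕ => (Φ (-2 - (n:ℤ)), Φ (-1 - (n:ℤ)), Φ (0 - (n:ℤ)), Φ (1 - (n:ℤ))))
        Filter.atTop (nhds ((0:ℝ), (0:ℝ), (0:ℝ), (0:ℝ))) :=
      t2.prodMk_nhds (t1.prodMk_nhds (t0.prodMk_nhds tp1))
    have h := ((QB_cont z).tendsto ((0:ℝ), (0:ℝ), (0:ℝ), (0:ℝ))).comp hq
    have h' : Filter.Tendsto
        (fun n : ℕ => QB z (Φ (-2 - (n:ℤ))) (Φ (-1 - (n:ℤ))) (Φ (0 - (n:ℤ))) (Φ (1 - (n:ℤ))))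
        Filter.atTop (nhds 0) := by
      simpa [Function.comp_def, QB_zero] using h
    exact h'.congr fun n => (Bflux_eq_QB z Φ n).symm
  -- nonnegative dissipation coefficients
  have hq1 : (0:ℝ) ≤ 1 - z^2 := by nlinarith
  have hq2 : (0:ℝ) ≤ 4 - z^2 := by nlinarith
  have hc3 : 0 ≤ z ^ 2 * (1 - z ^ 2) * (4 - z ^ 2) / 72 :=
    div_nonneg (mul_nonneg (mul_nonneg (sq_nonneg z) hq1) hq2) (by norm_num)
  have hc4 : 0 ≤ z ^ 2 * (1 - z ^ 2) ^ 2 * (4 - z ^ 2) / 576 :=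
    div_nonneg (mul_nonneg (mul_nonneg (sq_nonneg z) (sq_nonneg _)) hq2) (by norm_num)
  -- telescoping identity for partial sums
  have tele : ∀ N : ℕ,
      ∑ n ∈ Finset.range N,
        (A5 z (z * (1 - z ^ 2) / 6) (-(z ^ 2 * (1 - z ^ 2)) / 24) Φ (-1 - (n:ℤ))) ^ 2
      = (∑ n ∈ Finset.range N, (Φ (-1 - (n:ℤ))) ^ 2)
        + Bflux z Φ (-1) - Bflux z Φ (-1 - (N:ℤ))
        - ∑ n ∈ Finset.range N,
            (z ^ 2 * (1 - z ^ 2) * (4 - z ^ 2) / 72 * (DLap Φ (-1 - (n:ℤ))) ^ 2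
             + z ^ 2 * (1 - z ^ 2) ^ 2 * (4 - z ^ 2) / 576 * (Lap2 Φ (-1 - (n:ℤ))) ^ 2) := by
    intro N
    induction N with
    | zero => norm_num
    | succ N ih =>
      rw [Finset.sum_range_succ, Finset.sum_range_succ, Finset.sum_range_succ, ih]
      have hstep := A5_step z Φ (-1 - (N:ℤ))
      have hidx : (-1 - (N:ℤ)) - 1 = -1 - ((N + 1 : ℕ) : ℤ) := by push_cast; ring
      rw [hidx] at hstep
      linarith
  -- reindexing equivalence
  let e : ℕ ≃ {j : ℤ // j ≤ -1} :=
    { toFun := fun n => ⟨-1 - (n:ℤ), by omega⟩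
      invFun := fun j => (-1 - j.1).toNat
      left_inv := fun n => by
        show (-1 - (-1 - (n:ℤ))).toNat = n
        omega
      right_inv := fun j => Subtype.ext (by
        show -1 - (((-1 - j.1).toNat : ℤ)) = j.1
        have := j.2
        omega) }
  have etsum1 : (∑' j : {j : ℤ // j ≤ -1}, (Φ j.1) ^ 2)
      = ∑' n : ℕ, (Φ (-1 - (n:ℤ))) ^ 2 := (e.tsum_eq (fun j => (Φ j.1) ^ 2)).symm
  have etsum2 : (∑' j : {j : ℤ // j ≤ -1},
        (A5 z (z * (1 - z ^ 2) / 6) (-(z ^ 2 * (1 - z ^ 2)) / 24) Φ j.1) ^ 2)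
      = ∑' n : ℕ, (A5 z (z * (1 - z ^ 2) / 6) (-(z ^ 2 * (1 - z ^ 2)) / 24) Φ (-1 - (n:ℤ))) ^ 2 :=
    (e.tsum_eq (fun j => (A5 z (z * (1 - z ^ 2) / 6) (-(z ^ 2 * (1 - z ^ 2)) / 24) Φ j.1) ^ 2)).symm
  have hsum1 := hsum (-1) (by norm_num)
  have hTle : ∀ N : ℕ, ∑ n ∈ Finset.range N, (Φ (-1 - (n:ℤ))) ^ 2
      ≤ ∑' n : ℕ, (Φ (-1 - (n:ℤ))) ^ 2 :=
    fun N => Summable.sum_le_tsum _ (fun i _ => sq_nonneg _) hsum1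
  have hbdry := A5_boundary z hz1 hz2 Φ hg1 hg2
  -- bound for every finite partial sum
  have hfin : ∀ s : Finset ℕ,
      (∑ n ∈ s, (A5 z (z * (1 - z ^ 2) / 6) (-(z ^ 2 * (1 - z ^ 2)) / 24) Φ (-1 - (n:ℤ))) ^ 2)
      ≤ (∑' n : ℕ, (Φ (-1 - (n:ℤ))) ^ 2) + 1 / 2 * (Φ 0) ^ 2
        - 1 / 2 * (A5 z (z * (1 - z ^ 2) / 6) (-(z ^ 2 * (1 - z ^ 2)) / 24) Φ 0) ^ 2 := by
    intro s
    obtain ⟨N, hNs⟩ := s.exists_nat_subset_range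
    have hU : Filter.Tendsto
        (fun M : ℕ => ((∑' n : ℕ, (Φ (-1 - (n:ℤ))) ^ 2) + 1 / 2 * (Φ 0) ^ 2
          - 1 / 2 * (A5 z (z * (1 - z ^ 2) / 6) (-(z ^ 2 * (1 - z ^ 2)) / 24) Φ 0) ^ 2)
          - Bflux z Φ (-1 - (M:ℤ))) Filter.atTop
        (nhds ((∑' n : ℕ, (Φ (-1 - (n:ℤ))) ^ 2) + 1 / 2 * (Φ 0) ^ 2
          - 1 / 2 * (A5 z (z * (1 - z ^ 2) / 6) (-(z ^ 2 * (1 - z ^ 2)) / 24) Φ 0) ^ 2)) := by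
      simpa using (tendsto_const_nhds.sub hB)
    refine ge_of_tendsto hU ?_
    refine Filter.eventually_atTop.mpr ⟨N, fun M hM => ?_⟩
    have h1 : (∑ n ∈ s,
          (A5 z (z * (1 - z ^ 2) / 6) (-(z ^ 2 * (1 - z ^ 2)) / 24) Φ (-1 - (n:ℤ))) ^ 2)
        ≤ ∑ n ∈ Finset.range M,
          (A5 z (z * (1 - z ^ 2) / 6) (-(z ^ 2 * (1 - z ^ 2)) / 24) Φ (-1 - (n:ℤ))) ^ 2 :=
      Finset.sum_le_sum_of_subset_of_nonneg
        (hNs.trans (Finset.range_subset_range.mpr hM)) (fun i _ _ => sq_nonneg _)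
    have h2 := tele M
    have h3 : 0 ≤ ∑ n ∈ Finset.range M,
        (z ^ 2 * (1 - z ^ 2) * (4 - z ^ 2) / 72 * (DLap Φ (-1 - (n:ℤ))) ^ 2
         + z ^ 2 * (1 - z ^ 2) ^ 2 * (4 - z ^ 2) / 576 * (Lap2 Φ (-1 - (n:ℤ))) ^ 2) :=
      Finset.sum_nonneg fun i _ =>
        add_nonneg (mul_nonneg hc3 (sq_nonneg _)) (mul_nonneg hc4 (sq_nonneg _))
    have h4 := hTle M
    linarith
  rw [etsum2, etsum1]
  have hc0 : (0:ℝ) ≤ (∑' n : ℕ, (Φ (-1 - (n:ℤ))) ^ 2) + 1 / 2 * (Φ 0) ^ 2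
      - 1 / 2 * (A5 z (z * (1 - z ^ 2) / 6) (-(z ^ 2 * (1 - z ^ 2)) / 24) Φ 0) ^ 2 := by
    have := hfin ∅
    simpa using this
  have hts := tsum_le_of_sum_le' (L := SummationFilter.unconditional ℕ) hc0 hfin
  linarith
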